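/- For all integers n ≥ 1 and D ≥ 0, one has C(n,D) = Σ_{m=0}^{D} ( C(n−1,m) − r(n−1,m)·log C(D,m) ), where C(D,m) denotes the binomial coefficient 'D choose m'. -/

import Mathlib

open Finset

/-- `C(n,D) = Σ_{i_0+⋯+i_n = D} log((i_0!⋯i_n!)/D!)`. -/
noncomputable def Cconst (n D : ℕ) : ℝ :=
  ∑ i ∈ Finset.Nat.antidiagonalTuple (n + 1) D,
    Real.log (((∏ k, Nat.factorial (i k) : ℕ) : ℝ) / (Nat.factorial D : ℝ))

lemma sum_antidiagonalTuple_succ {M : Type*} [AddCommMonoid M] (k D : ℕ)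
    (f : (Fin (k + 1) → ℕ) → M) :
    ∑ x ∈ Finset.Nat.antidiagonalTuple (k + 1) D, f x =
      ∑ m ∈ Finset.range (D + 1), ∑ y ∈ Finset.Nat.antidiagonalTuple k m,
        f (Fin.cons (D - m) y) := by
  rw [← Finset.sum_sigma (Finset.range (D + 1)) (fun m => Finset.Nat.antidiagonalTuple k m)
    (fun p => f (Fin.cons (D - p.1) p.2 : Fin (k + 1) → ℕ))]
  refine Finset.sum_nbij' (fun x : Fin (k + 1) → ℕ => (⟨D - x 0, Fin.tail x⟩ : Σ _ : ℕ, Fin k → ℕ))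
    (fun p : Σ _ : ℕ, Fin k → ℕ => (Fin.cons (D - p.1) p.2 : Fin (k + 1) → ℕ)) ?_ ?_ ?_ ?_ ?_
  · intro x hx
    simp only [Finset.Nat.mem_antidiagonalTuple, Fin.sum_univ_succ] at hx
    simp only [Finset.mem_sigma, Finset.mem_range, Finset.Nat.mem_antidiagonalTuple]
    constructor
    · omega
    · show ∑ i : Fin k, x (Fin.succ i) = D - x 0
      omega
  · rintro ⟨m, y⟩ hp
    simp only [Finset.mem_sigma, Finset.mem_range, Finset.Nat.mem_antidiagonalTuple] at hp ⊢
    rw [Fin.sum_univ_succ]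
    simp only [Fin.cons_zero, Fin.cons_succ]
    omega
  · intro x hx
    simp only [Finset.Nat.mem_antidiagonalTuple, Fin.sum_univ_succ] at hx
    have h0 : D - (D - x 0) = x 0 := by omega
    simp only [h0, Fin.cons_self_tail]
  · rintro ⟨m, y⟩ hp
    simp only [Finset.mem_sigma, Finset.mem_range, Finset.Nat.mem_antidiagonalTuple] at hp
    simp only [Fin.cons_zero, Fin.tail_cons]
    have h0 : D - (D - m) = m := by omega
    exact Sigma.ext h0 (by rw [h0])
  · intro x hx
    simp only [Finset.Nat.mem_antidiagonalTuple, Fin.sum_univ_succ] at hx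
    have h0 : D - (D - x 0) = x 0 := by omega
    rw [h0, Fin.cons_self_tail]

lemma card_antidiagonalTuple (k m : ℕ) :
    (Finset.Nat.antidiagonalTuple (k + 1) m).card = (k + m).choose k := by
  induction k generalizing m with
  | zero => simp [Finset.Nat.antidiagonalTuple_one]
  | succ k ih =>
    have h1 : (Finset.Nat.antidiagonalTuple (k + 2) m).card =
        ∑ j ∈ Finset.range (m + 1), (Finset.Nat.antidiagonalTuple (k + 1) j).card := by
      rw [Finset.card_eq_sum_ones, sum_antidiagonalTuple_succ (k + 1) m (fun _ => 1)]
      exact Finset.sum_congr rfl fun j _ => (Finset.card_eq_sum_ones _).symm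
    rw [h1]
    calc ∑ j ∈ Finset.range (m + 1), (Finset.Nat.antidiagonalTuple (k + 1) j).card
        = ∑ j ∈ Finset.range (m + 1), (j + k).choose k := by
          refine Finset.sum_congr rfl fun j _ => ?_
          rw [ih j, Nat.add_comm]
      _ = (m + k + 1).choose (k + 1) := Nat.sum_range_add_choose m k
      _ = (k + 1 + m).choose (k + 1) := by ring_nf

theorem stmt_5 (n D : ℕ) (hn : 1 ≤ n) :
    Cconst n D = ∑ m ∈ Finset.range (D + 1),
      (Cconst (n - 1) m - (Nat.choose (n - 1 + m) (n - 1) : ℝ) * Real.log (Nat.choose D m)) := by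
  obtain ⟨j, rfl⟩ : ∃ j, n = j + 1 := ⟨n - 1, by omega⟩
  simp only [Nat.add_sub_cancel]
  rw [Cconst, sum_antidiagonalTuple_succ (j + 1) D]
  refine Finset.sum_congr rfl fun m hm => ?_
  rw [Finset.mem_range] at hm
  have hmD : m ≤ D := by omega
  have key : ∀ y ∈ Finset.Nat.antidiagonalTuple (j + 1) m,
      Real.log (((∏ k, Nat.factorial ((Fin.cons (D - m) y : Fin (j + 2) → ℕ) k) : ℕ) : ℝ)
          / (Nat.factorial D : ℝ)) =
      Real.log (((∏ k, Nat.factorial (y k) : ℕ) : ℝ) / (Nat.factorial m : ℝ))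
        - Real.log (Nat.choose D m) := by
    intro y hy
    have hprod : (∏ k, Nat.factorial ((Fin.cons (D - m) y : Fin (j + 2) → ℕ) k)) =
        (D - m).factorial * ∏ k, Nat.factorial (y k) := by
      rw [Fin.prod_univ_succ]
      simp
    have hfac : Nat.choose D m * m.factorial * (D - m).factorial = D.factorial :=
      Nat.choose_mul_factorial_mul_factorial hmD
    have hC : (0 : ℝ) < Nat.choose D m := by
      exact_mod_cast Nat.choose_pos hmD
    have hP : (0 : ℝ) < (∏ k, Nat.factorial (y k) : ℕ) := by
      positivity
    have hm' : (0 : ℝ) < m.factorial := by positivity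
    have hdm : (0 : ℝ) < (D - m).factorial := by positivity
    have hD : (0 : ℝ) < D.factorial := by positivity
    rw [hprod]
    push_cast
    rw [Real.log_div (by positivity) (by positivity),
      Real.log_div (by positivity) (by positivity),
      Real.log_mul (by positivity) (by positivity)]
    have hDfac : (D.factorial : ℝ) = Nat.choose D m * m.factorial * (D - m).factorial := by
      exact_mod_cast hfac.symm
    rw [hDfac, Real.log_mul (by positivity) (by positivity),
      Real.log_mul (by positivity) (by positivity)]
    ring
  rw [Finset.sum_congr rfl key, Finset.sum_sub_distrib, Finset.sum_const,
    card_antidiagonalTuple j m, nsmul_eq_mul, Cconst]
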